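/- Let A be a stable nil (respectively, stable algebraic) F-algebra. Then for an arbitrary F-algebra B, the algebra S(A,B) is nil (respectively, algebraic). -/

import Mathlib

open TensorProduct

noncomputable section

universe u v w

/-- `pwAux mul x n = x^(n+1)` (left-normed powers) with respect to a multiplication `mul`. -/
def pwAux {P : Type*} (mul : P → P → P) (x : P) : ℕ → P
  | 0 => x
  | n + 1 => mul x (pwAux mul x n)

/-- `pw mul x n = x^n` for `n ≥ 1`, with the junk value `pw mul x 0 = 0`. -/
def pw {P : Type*} [Zero P] (mul : P → P → P) (x : P) : ℕ → P
  | 0 => 0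
  | n + 1 => pwAux mul x n

/-- Every element of `s` is nilpotent with respect to `mul`. -/
def IsNilMul {P : Type*} [Zero P] (mul : P → P → P) (s : Set P) : Prop :=
  ∀ x ∈ s, ∃ n : ℕ, 1 ≤ n ∧ pw mul x n = 0

/-- A (not necessarily unital) ring is nil iff every element is nilpotent. -/
def IsNilRing (R : Type*) [NonUnitalRing R] : Prop :=
  IsNilMul (· * ·) (Set.univ : Set R)

/-- Every element of `s` satisfies a nonzero polynomial over `F` with zero constant term. -/
def IsAlgebraicMul (F : Type*) [Field F] {P : Type*} [AddCommGroup P] [Module F P]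
    (mul : P → P → P) (s : Set P) : Prop :=
  ∀ x ∈ s, ∃ p : Polynomial F, p ≠ 0 ∧ p.coeff 0 = 0 ∧ (p.sum fun i c => c • pw mul x i) = 0

/-- An `F`-algebra is algebraic iff every element satisfies a nonzero polynomial over `F`
with zero constant term (equivalently, generates a finite-dimensional subalgebra). -/
def IsAlgebraicRing (F : Type*) [Field F] (R : Type*) [NonUnitalRing R] [Module F R] : Prop :=
  IsAlgebraicMul F (· * ·) (Set.univ : Set R)

/-- `R` is stable nil: all matrix algebras `M_n(R)` are nil. -/
def IsStableNil (R : Type*) [NonUnitalRing R] : Prop :=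
  ∀ n : ℕ, IsNilRing (Matrix (Fin n) (Fin n) R)

/-- `R` is stable algebraic: all matrix algebras `M_n(R)` are algebraic over `F`. -/
def IsStableAlgebraic (F : Type*) [Field F] (R : Type*) [NonUnitalRing R] [Module F R] : Prop :=
  ∀ n : ℕ, IsAlgebraicRing F (Matrix (Fin n) (Fin n) R)

/-- A (not necessarily unital) ring is Jacobson radical iff every element `a` is
quasi-regular: there is `a'` with `a + a' + aa' = 0` and `a + a' + a'a = 0`. -/
def IsJacobsonRadical (R : Type*) [NonUnitalRing R] : Prop :=
  ∀ a : R, ∃ a' : R, a + a' + a * a' = 0 ∧ a + a' + a' * a = 0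

/-- `C` is finitely generated as a (non-unital) `F`-algebra. -/
def IsFinGenAlg (F : Type*) [Field F] (C : Type*) [NonUnitalRing C] [Module F C]
    [SMulCommClass F C C] [IsScalarTower F C C] : Prop :=
  ∃ s : Finset C, NonUnitalAlgebra.adjoin F (s : Set C) = ⊤

/-- `IsWord mul s k x` : `x` is a product (with some bracketing) of `k` factors from `s`. -/
inductive IsWord {P : Type*} (mul : P → P → P) (s : Set P) : ℕ → P → Prop
  | base {x : P} : x ∈ s → IsWord mul s 1 x
  | mul {m n : ℕ} {x y : P} : IsWord mul s m x → IsWord mul s n y →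
      IsWord mul s (m + n) (mul x y)

/-- The span `U^{≤n}` of all products of at most `n` factors from `U` (w.r.t. `mul`). -/
def wordSpan (F : Type*) [Field F] {P : Type*} [AddCommGroup P] [Module F P]
    (mul : P → P → P) (U : Submodule F P) (n : ℕ) : Submodule F P :=
  Submodule.span F {x | ∃ k, 1 ≤ k ∧ k ≤ n ∧ IsWord mul (U : Set P) k x}

/-- The growth function `g(U, n) = dim_F U^{≤n}` of the subspace `U` w.r.t. `mul`. -/
def growthFn (F : Type*) [Field F] {P : Type*} [AddCommGroup P] [Module F P]
    (mul : P → P → P) (U : Submodule F P) (n : ℕ) : ℕ :=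
  Module.finrank F (wordSpan F mul U n)

/-- `GKdimLE F R d` : the Gelfand–Kirillov dimension of the `F`-algebra `R` is at most `d`,
i.e. for every finite-dimensional subspace `U` and every `α > d` one has
`g(U, n) ≼ n^α`. -/
def GKdimLE (F : Type*) [Field F] (R : Type*) [NonUnitalRing R] [Module F R] (d : ℝ) : Prop :=
  ∀ U : Submodule F R, FiniteDimensional F U → ∀ α : ℝ, d < α →
    ∃ c : ℕ, 0 < c ∧ ∀ n : ℕ, (growthFn F (· * ·) U n : ℝ) ≤ c * ((c * n : ℕ) : ℝ) ^ α

/-- `GKdimEQ F R d` : the Gelfand–Kirillov dimension of `R` is exactly `d`. -/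
def GKdimEQ (F : Type*) [Field F] (R : Type*) [NonUnitalRing R] [Module F R] (d : ℝ) : Prop :=
  GKdimLE F R d ∧ ∀ e : ℝ, GKdimLE F R e → d ≤ e

section Wreath

variable (F : Type*) [Field F]
variable (A : Type*) [NonUnitalRing A] [Module F A] [SMulCommClass F A A] [IsScalarTower F A A]
variable (B : Type*) [NonUnitalRing B] [Module F B] [SMulCommClass F B B] [IsScalarTower F B B]

/-- The multiplication `fg = (1 ⊗ μ) ∘ (f ⊗ 1) ∘ g` on `Lin(B, B ⊗ A)`. -/
def wrMul (f g : B →ₗ[F] B ⊗[F] A) : B →ₗ[F] B ⊗[F] A :=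
  (LinearMap.lTensor B (LinearMap.mul' F A)) ∘ₗ (TensorProduct.assoc F B A A).toLinearMap ∘ₗ
    (LinearMap.rTensor A f) ∘ₗ g

/-- The left action of `B` on `Lin(B, B ⊗ A)` : `(bf)(b') = (b ⊗ 1) f(b')`. -/
def actL (b : B) (f : B →ₗ[F] B ⊗[F] A) : B →ₗ[F] B ⊗[F] A :=
  (LinearMap.rTensor A (LinearMap.mulLeft F b)) ∘ₗ f

/-- The right action of `B` on `Lin(B, B ⊗ A)` : `(fb)(b') = f(bb')`. -/
def actR (f : B →ₗ[F] B ⊗[F] A) (b : B) : B →ₗ[F] B ⊗[F] A :=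
  f ∘ₗ LinearMap.mulLeft F b

/-- The multiplication of the matrix wreath product `A ≀ B = B ⊕ Lin(B, B ⊗ A)`,
extending the multiplications of `B` and of `Lin(B, B ⊗ A)` via the two `B`-actions. -/
def wm (x y : B × (B →ₗ[F] B ⊗[F] A)) : B × (B →ₗ[F] B ⊗[F] A) :=
  (x.1 * y.1, wrMul F A B x.2 y.2 + actL F A B x.1 y.2 + actR F A B x.2 y.1)

/-- `S(A,B)` : all `f : B → B ⊗ A` with `f(B) ⊆ V ⊗ A` for some finite-dimensional
subspace `V ⊆ B`. -/
def SAB : Set (B →ₗ[F] B ⊗[F] A) :=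
  {f | ∃ V : Submodule F B, FiniteDimensional F V ∧
    LinearMap.range f ≤ LinearMap.range (LinearMap.rTensor A V.subtype)}

/-- The matrix entry `a_{ij}` of `f : B → B ⊗ A` w.r.t. a basis `β` of `B`, determined by
`f(β j) = Σ_i (β i) ⊗ a_{ij}`. -/
def entryOf {I : Type*} [DecidableEq I] (β : Module.Basis I F B) (f : B →ₗ[F] B ⊗[F] A)
    (i j : I) : A :=
  (TensorProduct.finsuppScalarLeft F A I
    ((LinearMap.rTensor A β.repr.toLinearMap) (f (β j)))) i

/-- `M_∞(A)` : the elements of `Lin(B, B ⊗ A)` whose matrix w.r.t. the basis `β` has only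
finitely many nonzero entries. -/
def MinfSet {I : Type*} [DecidableEq I] (β : Module.Basis I F B) : Set (B →ₗ[F] B ⊗[F] A) :=
  {f | {p : I × I | entryOf F A B β f p.1 p.2 ≠ 0}.Finite}

end Wreath

section UnitalB

variable (F : Type*) [Field F]
variable (A : Type*) [NonUnitalRing A] [Module F A] [SMulCommClass F A A] [IsScalarTower F A A]
variable (B : Type*) [Ring B] [Algebra F B]

/-- The element `c_γ : b ↦ 1 ⊗ γ(b)` of `Lin(B, B ⊗ A)`. -/
def cgam (γ : B →ₗ[F] A) : B →ₗ[F] B ⊗[F] A :=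
  (TensorProduct.mk F B A 1) ∘ₗ γ

/-- `GammaWord γ V k a` : `a` is a product `γ(v₁)⋯γ(v_r)` with `v_j ∈ V^{i_j}` and
`i₁ + ⋯ + i_r = k`, `i_j ≥ 1`. -/
inductive GammaWord (γ : B →ₗ[F] A) (V : Submodule F B) : ℕ → A → Prop
  | base {i : ℕ} (hi : 1 ≤ i) {b : B} (hb : b ∈ wordSpan F (· * ·) V i) :
      GammaWord γ V i (γ b)
  | mul {m n : ℕ} {a a' : A} : GammaWord γ V m a → GammaWord γ V n a' →
      GammaWord γ V (m + n) (a * a')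

/-- The subspace `W_n = Σ_{i₁+⋯+i_r ≤ n} γ(V^{i₁})⋯γ(V^{i_r})` of `A`. -/
def Wspan (γ : B →ₗ[F] A) (V : Submodule F B) (n : ℕ) : Submodule F A :=
  Submodule.span F {a | ∃ k, k ≤ n ∧ GammaWord F A B γ V k a}

/-- `w_γ(n) = dim_F W_n`. -/
def wfn (γ : B →ₗ[F] A) (V : Submodule F B) (n : ℕ) : ℕ :=
  Module.finrank F (Wspan F A B γ V n)

end UnitalB

section PrimePrimitive

variable {P : Type v} [AddCommGroup P]

/-- `I` is a two-sided ideal of the subalgebra of the ambient algebra `(P, mul)` given by the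
additive subgroup `T`. -/
def IsIdealIn (mul : P → P → P) (T I : AddSubgroup P) : Prop :=
  I ≤ T ∧ ∀ x ∈ T, ∀ y ∈ I, mul x y ∈ I ∧ mul y x ∈ I

/-- The subalgebra `T` of `(P, mul)` is a prime algebra: the product of two nonzero
two-sided ideals is nonzero. -/
def IsPrimeIn (mul : P → P → P) (T : AddSubgroup P) : Prop :=
  ∀ I J : AddSubgroup P, IsIdealIn mul T I → IsIdealIn mul T J →
    (∀ a ∈ I, ∀ b ∈ J, mul a b = 0) → I = ⊥ ∨ J = ⊥

/-- The subalgebra `T` of `(P, mul)` is a (left) primitive algebra: it has a faithful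
irreducible left module. -/
def IsPrimitiveIn (mul : P → P → P) (T : AddSubgroup P) : Prop :=
  ∃ (M : Type v) (_ : AddCommGroup M) (ρ : P → AddMonoid.End M),
    (∀ x ∈ T, ∀ y ∈ T, ρ (x + y) = ρ x + ρ y) ∧
    (∀ x ∈ T, ∀ y ∈ T, ρ (mul x y) = ρ x * ρ y) ∧
    Set.InjOn ρ (T : Set P) ∧
    (∃ x ∈ T, ∃ m : M, (ρ x) m ≠ 0) ∧
    (∀ m : M, m ≠ 0 → ∀ y : M, ∃ x ∈ T, (ρ x) m = y)

end PrimePrimitive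

/-- A (not necessarily unital) ring is (left) primitive: it has a faithful irreducible
left module. -/
def IsPrimitiveRing (R : Type v) [NonUnitalRing R] : Prop :=
  ∃ (M : Type v) (_ : AddCommGroup M) (ρ : R →ₙ+* AddMonoid.End M),
    Function.Injective ρ ∧ (∃ r : R, ∃ m : M, (ρ r) m ≠ 0) ∧
    (∀ m : M, m ≠ 0 → ∀ y : M, ∃ r : R, (ρ r) m = y)

/-- The multiplication of `M_∞(A)`, realized as finitely supported `ℕ × ℕ` matrices over `A`. -/
def minfMul {A : Type*} [NonUnitalRing A] (x y : (ℕ × ℕ) →₀ A) : (ℕ × ℕ) →₀ A :=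
  x.sum fun p a => y.sum fun q b => if p.2 = q.1 then Finsupp.single (p.1, q.2) (a * b) else 0

end

noncomputable section Aux10

variable {F : Type*} [Field F]
variable {A : Type*} [NonUnitalRing A] [Module F A] [SMulCommClass F A A] [IsScalarTower F A A]
variable {B : Type*} [NonUnitalRing B] [Module F B] [SMulCommClass F B B] [IsScalarTower F B B]
variable {n : ℕ}

/-- `EE ι c = ∑ i, ι i ⊗ c i`. -/
def EE (ι : Fin n → B) : (Fin n → A) →ₗ[F] B ⊗[F] A :=
  ∑ i, (TensorProduct.mk F B A (ι i)) ∘ₗ LinearMap.proj i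

lemma EE_apply (ι : Fin n → B) (c : Fin n → A) :
    EE (F := F) ι c = ∑ i, ι i ⊗ₜ[F] c i := by
  simp [EE]

/-- Left multiplication by the matrix `M` on column vectors over `A`. -/
def Mop (M : Matrix (Fin n) (Fin n) A) : (Fin n → A) →ₗ[F] (Fin n → A) where
  toFun c := fun k => ∑ i, M k i * c i
  map_add' x y := by funext k; simp [mul_add, Finset.sum_add_distrib]
  map_smul' s x := by funext k; simp [mul_smul_comm, Finset.smul_sum]

lemma Mop_apply (M : Matrix (Fin n) (Fin n) A) (c : Fin n → A) (k : Fin n) :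
    Mop (F := F) M c k = ∑ i, M k i * c i := rfl

lemma Mop_mul (M N : Matrix (Fin n) (Fin n) A) :
    Mop (F := F) (M * N) = Mop M ∘ₗ Mop N := by
  apply LinearMap.ext; intro c; funext k
  simp only [Mop_apply, LinearMap.comp_apply, Matrix.mul_apply, Finset.sum_mul,
    Finset.mul_sum, mul_assoc]
  exact Finset.sum_comm

lemma Mop_add (M N : Matrix (Fin n) (Fin n) A) :
    Mop (F := F) (M + N) = Mop M + Mop N := by
  apply LinearMap.ext; intro c; funext k
  simp [Mop_apply, add_mul, Finset.sum_add_distrib]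

lemma Mop_smul (s : F) (M : Matrix (Fin n) (Fin n) A) :
    Mop (F := F) (s • M) = s • Mop M := by
  apply LinearMap.ext; intro c; funext k
  simp [Mop_apply, smul_mul_assoc, Finset.smul_sum]

/-- `Theta ι φ N = EE ι ∘ Mop N ∘ φ`, linearly in `N`. -/
def Theta (ι : Fin n → B) (φ : B →ₗ[F] (Fin n → A)) :
    Matrix (Fin n) (Fin n) A →ₗ[F] (B →ₗ[F] B ⊗[F] A) where
  toFun N := EE ι ∘ₗ Mop N ∘ₗ φ
  map_add' M N := by
    simp only [Mop_add]; apply LinearMap.ext; intro b; simp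
  map_smul' s M := by
    simp only [Mop_smul]; apply LinearMap.ext; intro b; simp

lemma wrMul_EE (f : B →ₗ[F] B ⊗[F] A) (ι : Fin n → B) (M : Matrix (Fin n) (Fin n) A)
    (hM : ∀ i, f (ι i) = ∑ k, ι k ⊗ₜ[F] M k i)
    (ψ : B →ₗ[F] (Fin n → A)) :
    wrMul F A B f (EE ι ∘ₗ ψ) = EE ι ∘ₗ Mop M ∘ₗ ψ := by
  apply LinearMap.ext; intro b
  simp only [wrMul, LinearMap.comp_apply, EE_apply, Mop_apply]
  have h1 : (LinearMap.rTensor A f) (∑ i, ι i ⊗ₜ[F] ψ b i)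
      = ∑ i, (∑ k, ι k ⊗ₜ[F] M k i) ⊗ₜ[F] ψ b i := by
    rw [map_sum]
    exact Finset.sum_congr rfl fun i _ => by rw [LinearMap.rTensor_tmul, hM i]
  rw [h1]
  simp only [TensorProduct.sum_tmul, map_sum, TensorProduct.assoc_tmul,
    LinearMap.lTensor_tmul, LinearMap.mul'_apply, TensorProduct.tmul_sum]
  exact Finset.sum_comm

lemma pow_formula (f : B →ₗ[F] B ⊗[F] A) (ι : Fin n → B) (φ : B →ₗ[F] (Fin n → A))
    (M : Matrix (Fin n) (Fin n) A)
    (hf : f = EE ι ∘ₗ φ) (hM : ∀ i, f (ι i) = ∑ k, ι k ⊗ₜ[F] M k i) :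
    ∀ m : ℕ, pwAux (wrMul F A B) f (m + 1) = Theta ι φ (pwAux (· * ·) M m) := by
  intro m
  induction m with
  | zero =>
      show wrMul F A B f (pwAux (wrMul F A B) f 0) = EE ι ∘ₗ Mop M ∘ₗ φ
      have h := wrMul_EE f ι M hM φ
      rw [← hf] at h
      exact h
  | succ m ih =>
      show wrMul F A B f (pwAux (wrMul F A B) f (m + 1)) = _
      rw [ih]
      show wrMul F A B f (EE ι ∘ₗ Mop (pwAux (· * ·) M m) ∘ₗ φ) = _
      rw [wrMul_EE f ι M hM (Mop (pwAux (· * ·) M m) ∘ₗ φ)]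
      show _ = EE ι ∘ₗ Mop (M * pwAux (· * ·) M m) ∘ₗ φ
      rw [Mop_mul, LinearMap.comp_assoc]

lemma setup_SAB (f : B →ₗ[F] B ⊗[F] A) (hf : f ∈ SAB F A B) :
    ∃ (n : ℕ) (ι : Fin n → B) (φ : B →ₗ[F] (Fin n → A)) (M : Matrix (Fin n) (Fin n) A),
      f = EE ι ∘ₗ φ ∧ (∀ i, f (ι i) = ∑ k, ι k ⊗ₜ[F] M k i) := by
  obtain ⟨V, hV, hr⟩ := hf
  set nn := Module.finrank F V with hnn
  let β : Module.Basis (Fin nn) F V := Module.finBasis F V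
  let ι : Fin nn → B := fun i => (β i : B)
  let ε : V ⊗[F] A →ₗ[F] (Fin nn → A) :=
    LinearMap.pi fun i => (TensorProduct.lid F A).toLinearMap ∘ₗ LinearMap.rTensor A (β.coord i)
  have hEε : (EE (F := F) ι) ∘ₗ ε = LinearMap.rTensor A V.subtype := by
    apply TensorProduct.ext'
    intro v a
    have hεva : ε (v ⊗ₜ[F] a) = fun i => β.repr v i • a := by
      funext i
      simp [ε, Module.Basis.coord_apply]
    rw [LinearMap.comp_apply, hεva, EE_apply, LinearMap.rTensor_tmul]
    have : ∀ i : Fin nn, ι i ⊗ₜ[F] (β.repr v i • a) = (β.repr v i • ι i) ⊗ₜ[F] a := by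
      intro i
      rw [TensorProduct.tmul_smul, TensorProduct.smul_tmul']
    rw [Finset.sum_congr rfl fun i _ => this i, ← TensorProduct.sum_tmul]
    congr 1
    have : ∑ i, β.repr v i • ι i = V.subtype (∑ i, β.repr v i • β i) := by
      rw [map_sum]; rfl
    rw [this, β.sum_repr v]
  have hg : Function.Injective (LinearMap.rTensor A V.subtype) :=
    Module.Flat.rTensor_preserves_injective_linearMap _ V.injective_subtype
  set e := LinearEquiv.ofInjective (LinearMap.rTensor A V.subtype) hg with he
  have hmem : ∀ b : B, f b ∈ LinearMap.range (LinearMap.rTensor A V.subtype) :=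
    fun b => hr ⟨b, rfl⟩
  let f₀ : B →ₗ[F] V ⊗[F] A :=
    e.symm.toLinearMap ∘ₗ LinearMap.codRestrict _ f hmem
  have hf0 : LinearMap.rTensor A V.subtype ∘ₗ f₀ = f := by
    apply LinearMap.ext; intro b
    have key : ∀ y : LinearMap.range (LinearMap.rTensor A V.subtype),
        LinearMap.rTensor A V.subtype (e.symm y) = (y : B ⊗[F] A) := by
      intro y
      have h1 : e (e.symm y) = y := e.apply_symm_apply y
      have h2 : ((e (e.symm y) : LinearMap.range (LinearMap.rTensor A V.subtype)) : B ⊗[F] A)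
          = LinearMap.rTensor A V.subtype (e.symm y) :=
        LinearEquiv.ofInjective_apply _ _
      rw [← h2, h1]
    exact key ⟨f b, hmem b⟩
  refine ⟨nn, ι, ε ∘ₗ f₀, Matrix.of fun k j => (ε ∘ₗ f₀) (ι j) k, ?_, ?_⟩
  · rw [← LinearMap.comp_assoc, hEε, hf0]
  · intro j
    have hfι : f (ι j) = EE (F := F) ι ((ε ∘ₗ f₀) (ι j)) := by
      conv_lhs => rw [← hf0]
      rw [← hEε]
      rfl
    rw [hfι, EE_apply]
    rfl

end Aux10

/-- **Lemma 10.** Let `A` be a stable nil (respectively, stable algebraic) `F`-algebra. Then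
for an arbitrary `F`-algebra `B`, the algebra `S(A,B)` is nil (respectively, algebraic). -/
theorem lemma10_SAB_nil_algebraic
    (F : Type*) [Field F]
    (A : Type*) [NonUnitalRing A] [Module F A] [SMulCommClass F A A] [IsScalarTower F A A]
    (B : Type*) [NonUnitalRing B] [Module F B] [SMulCommClass F B B] [IsScalarTower F B B] :
    (IsStableNil A → IsNilMul (wrMul F A B) (SAB F A B)) ∧
    (IsStableAlgebraic F A → IsAlgebraicMul F (wrMul F A B) (SAB F A B)) := by
  constructor
  · -- nil case
    intro hA f hf
    obtain ⟨n, ι, φ, M, hfφ, hM⟩ := setup_SAB f hf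
    obtain ⟨m, hm1, hm0⟩ := hA n M (Set.mem_univ M)
    obtain ⟨m', rfl⟩ : ∃ m', m = m' + 1 := ⟨m - 1, by omega⟩
    refine ⟨m' + 2, by omega, ?_⟩
    have hMz : pwAux (· * ·) M m' = 0 := hm0
    show pwAux (wrMul F A B) f (m' + 1) = 0
    rw [pow_formula f ι φ M hfφ hM m', hMz, map_zero]
  · -- algebraic case
    intro hA f hf
    obtain ⟨n, ι, φ, M, hfφ, hM⟩ := setup_SAB f hf
    obtain ⟨p, hp0, hpc, hps⟩ := hA n M (Set.mem_univ M)
    refine ⟨p * Polynomial.X, mul_ne_zero hp0 Polynomial.X_ne_zero,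
      Polynomial.coeff_mul_X_zero p, ?_⟩
    have hembinj : Function.Injective (fun i : ℕ => i + 1) := fun a b h => by simpa using h
    have hsupp : (p * Polynomial.X).support =
        p.support.map ⟨fun i => i + 1, hembinj⟩ := by
      ext j
      rcases j with _ | j
      · simp [Polynomial.mem_support_iff, Polynomial.coeff_mul_X_zero]
      · simp [Polynomial.mem_support_iff, Polynomial.coeff_mul_X]
    rw [Polynomial.sum_def, hsupp, Finset.sum_map]
    have key : ∀ i ∈ p.support,
        (p * Polynomial.X).coeff ((⟨fun i => i + 1, hembinj⟩ :
            Function.Embedding ℕ ℕ) i) • pw (wrMul F A B) f ((⟨fun i => i + 1,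
            hembinj⟩ : Function.Embedding ℕ ℕ) i)
          = Theta ι φ (p.coeff i • pw (· * ·) M i) := by
      intro i hi
      have hine : p.coeff i ≠ 0 := Polynomial.mem_support_iff.1 hi
      have hi0 : i ≠ 0 := fun h => hine (h ▸ hpc)
      obtain ⟨i', rfl⟩ : ∃ i', i = i' + 1 := ⟨i - 1, by omega⟩
      show (p * Polynomial.X).coeff (i' + 1 + 1) • pw (wrMul F A B) f (i' + 1 + 1) = _
      rw [Polynomial.coeff_mul_X]
      have h2 : pw (wrMul F A B) f (i' + 1 + 1) = pwAux (wrMul F A B) f (i' + 1) := rfl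
      have h3 : pw (· * ·) M (i' + 1) = pwAux (· * ·) M i' := rfl
      rw [h2, h3, pow_formula f ι φ M hfφ hM i', ← map_smul]
    simp only [Polynomial.sum_def] at hps
    rw [Finset.sum_congr rfl key, ← map_sum, hps, map_zero]
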